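/- Define H(t) = ln(t·Γ(t)/(1+t)^t) for t > 0. Then H(t) → 0 as t → 0⁺, and consequently (using strict concavity of H) for every real K > 1 and t > 0, K·H(t) > H(Kt). -/

import Mathlib

/-- H(t) = ln(t·Γ(t)/(1+t)^t). -/
noncomputable def Hfun (t : ℝ) : ℝ := Real.log (t * Real.Gamma t / (1 + t) ^ t)

open Real Filter Finset

noncomputable def gfun (t : ℝ) : ℝ := (t+1) * (Real.log (t+1) - Real.log (t+2)) + Real.log 2

noncomputable def gfun' (t : ℝ) : ℝ := Real.log (t+1) - Real.log (t+2) + (t+2)⁻¹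

noncomputable def gfun'' (t : ℝ) : ℝ := 1/(t+1) - 1/(t+2) - 1/(t+2)^2

lemma hd_gfun {x : ℝ} (hx : -1 < x) : HasDerivAt gfun (gfun' x) x := by
  have h1 : (0:ℝ) < x + 1 := by linarith
  have h2 : (0:ℝ) < x + 2 := by linarith
  have ha : HasDerivAt (fun t : ℝ => t + 1) 1 x := (hasDerivAt_id x).add_const 1
  have hb : HasDerivAt (fun t : ℝ => t + 2) 1 x := (hasDerivAt_id x).add_const 2
  have hl1 := ha.log h1.ne'
  have hl2 := hb.log h2.ne'
  have := (ha.fun_mul (hl1.fun_sub hl2)).add_const (Real.log 2)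
  refine this.congr_deriv ?_
  unfold gfun'
  field_simp
  ring

lemma hd_gfun' {x : ℝ} (hx : -1 < x) : HasDerivAt gfun' (gfun'' x) x := by
  have h1 : (0:ℝ) < x + 1 := by linarith
  have h2 : (0:ℝ) < x + 2 := by linarith
  have ha : HasDerivAt (fun t : ℝ => t + 1) 1 x := (hasDerivAt_id x).add_const 1
  have hb : HasDerivAt (fun t : ℝ => t + 2) 1 x := (hasDerivAt_id x).add_const 2
  have hl1 := ha.log h1.ne'
  have hl2 := hb.log h2.ne'
  have hinv := hb.inv h2.ne'
  have := (hl1.sub hl2).add hinv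
  refine this.congr_deriv ?_
  unfold gfun''
  field_simp
  ring

lemma gfun''_pos {x : ℝ} (hx : -1 < x) : 0 < gfun'' x := by
  have h1 : (0:ℝ) < x + 1 := by linarith
  have h2 : (0:ℝ) < x + 2 := by linarith
  have : gfun'' x = 1/((x+1)*(x+2)^2) := by unfold gfun''; field_simp; ring
  rw [this]; positivity

lemma gfun_strictConvex : StrictConvexOn ℝ (Set.Ici (0:ℝ)) gfun := by
  apply strictConvexOn_of_deriv2_pos (convex_Ici 0)
  · intro x hx
    exact (hd_gfun (by simp at hx; linarith)).continuousAt.continuousWithinAt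
  · intro x hx
    rw [interior_Ici] at hx
    have hx' : (-1:ℝ) < x := by simp at hx; linarith
    have hEq : deriv gfun =ᶠ[nhds x] gfun' := by
      apply Filter.eventuallyEq_of_mem (Ioi_mem_nhds hx')
      intro y hy
      exact (hd_gfun hy).deriv
    have : deriv^[2] gfun x = deriv gfun' x := by
      simp only [Function.iterate_succ, Function.iterate_zero, Function.comp_apply, Function.id_def]
      exact hEq.deriv_eq
    rw [this, (hd_gfun' hx').deriv]
    exact gfun''_pos hx'

lemma gfun_zero : gfun 0 = 0 := by
  unfold gfun; norm_num

noncomputable def Efun (n : ℕ) (t : ℝ) : ℝ :=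
  (t+1) * Real.log n + Real.log (n.factorial : ℝ) - (∑ j ∈ Finset.range (n+1), Real.log (t+1+j))
    - t * Real.log (1+t) + gfun t

noncomputable def Efun' (n : ℕ) (x : ℝ) : ℝ :=
  Real.log n - (∑ j ∈ Finset.range (n+1), (x+1+(j:ℝ))⁻¹)
    - (Real.log (1+x) + x * (1+x)⁻¹) + gfun' x

noncomputable def Efun'' (n : ℕ) (x : ℝ) : ℝ :=
  (∑ j ∈ Finset.range (n+1), 1/(x+1+(j:ℝ))^2) - (1/(1+x) + 1/(1+x)^2) + gfun'' x

lemma hd_Efun (n : ℕ) {x : ℝ} (hx : -1 < x) : HasDerivAt (Efun n) (Efun' n x) x := by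
  have h1 : (0:ℝ) < 1 + x := by linarith
  have hA : HasDerivAt (fun t : ℝ => (t+1) * Real.log n) (Real.log n) x := by
    simpa using ((hasDerivAt_id x).add_const 1).mul_const (Real.log n)
  have hS : HasDerivAt (fun t : ℝ => ∑ j ∈ Finset.range (n+1), Real.log (t+1+j))
      (∑ j ∈ Finset.range (n+1), (x+1+(j:ℝ))⁻¹) x := by
    apply HasDerivAt.fun_sum
    intro j _
    have hj : (0:ℝ) < x + 1 + j := by have := Nat.cast_nonneg (α := ℝ) j; linarith
    have := (((hasDerivAt_id x).add_const 1).add_const (j:ℝ)).log hj.ne'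
    simpa [one_div] using this
  have hT : HasDerivAt (fun t : ℝ => t * Real.log (1+t)) (Real.log (1+x) + x * (1+x)⁻¹) x := by
    have hl : HasDerivAt (fun t : ℝ => Real.log (1+t)) (1/(1+x)) x := by
      have := (((hasDerivAt_id x).const_add 1)).log h1.ne'
      simpa using this
    have := (hasDerivAt_id' x).fun_mul hl
    simpa [one_div] using this
  exact (((hA.add_const (Real.log (n.factorial : ℝ))).sub hS).sub hT).add (hd_gfun hx)

lemma hd_Efun' (n : ℕ) {x : ℝ} (hx : -1 < x) : HasDerivAt (Efun' n) (Efun'' n x) x := by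
  have h1 : (0:ℝ) < 1 + x := by linarith
  have hS : HasDerivAt (fun t : ℝ => ∑ j ∈ Finset.range (n+1), (t+1+(j:ℝ))⁻¹)
      (∑ j ∈ Finset.range (n+1), (-1/(x+1+(j:ℝ))^2)) x := by
    apply HasDerivAt.fun_sum
    intro j _
    have hj : (0:ℝ) < x + 1 + j := by have := Nat.cast_nonneg (α := ℝ) j; linarith
    exact (((hasDerivAt_id x).add_const 1).add_const (j:ℝ)).inv hj.ne'
  have hl : HasDerivAt (fun t : ℝ => Real.log (1+t)) ((1+x)⁻¹) x := by
    have := (((hasDerivAt_id x).const_add 1)).log h1.ne'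
    simpa [one_div] using this
  have hinv : HasDerivAt (fun t : ℝ => (1+t)⁻¹) (-1/(1+x)^2) x := by
    have := ((hasDerivAt_id x).const_add 1).inv h1.ne'
    exact this
  have hT : HasDerivAt (fun t : ℝ => Real.log (1+t) + t * (1+t)⁻¹)
      ((1+x)⁻¹ + ((1+x)⁻¹ + x * (-1/(1+x)^2))) x :=
    hl.add ((hasDerivAt_id x).mul hinv |>.congr_deriv (by simp only [id_eq]; ring))
  have := (((hasDerivAt_const x (Real.log n)).sub hS).sub hT).add (hd_gfun' hx)
  refine this.congr_deriv ?_
  unfold Efun''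
  rw [show (∑ j ∈ Finset.range (n+1), (-1/(x+1+(j:ℝ))^2))
      = -∑ j ∈ Finset.range (n+1), 1/(x+1+(j:ℝ))^2 by
    rw [← Finset.sum_neg_distrib]; exact Finset.sum_congr rfl fun j _ => by ring]
  have h2 : (1:ℝ)/(1+x) = (1+x)⁻¹ := one_div _
  have h3 : x * (-1/(1+x)^2) = -(x/(1+x)^2) := by ring
  field_simp
  ring

lemma tele (m : ℕ) {t : ℝ} (ht : 0 < t) :
    ∑ j ∈ Finset.range m, 1/(t+3+(j:ℝ))^2 ≤ 1/(t+2) := by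
  have h : ∀ j ∈ Finset.range m, 1/(t+3+(j:ℝ))^2 ≤ 1/(t+2+(j:ℝ)) - 1/(t+2+((j:ℝ)+1)) := by
    intro j _
    have hj : (0:ℝ) ≤ (j:ℝ) := Nat.cast_nonneg j
    have h2 : (0:ℝ) < t+2+j := by linarith
    have h3 : (0:ℝ) < t+3+j := by linarith
    rw [div_sub_div _ _ h2.ne' (by linarith : (t+2+((j:ℝ)+1)) ≠ 0)]
    rw [div_le_div_iff₀ (by positivity) (by positivity)]
    ring_nf
    nlinarith
  calc ∑ j ∈ Finset.range m, 1/(t+3+(j:ℝ))^2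
      ≤ ∑ j ∈ Finset.range m, (1/(t+2+(j:ℝ)) - 1/(t+2+((j:ℝ)+1))) := Finset.sum_le_sum h
    _ = 1/(t+2+((0:ℕ):ℝ)) - 1/(t+2+(m:ℝ)) := by
        rw [show (∑ j ∈ Finset.range m, (1/(t+2+(j:ℝ)) - 1/(t+2+((j:ℝ)+1))))
            = ∑ j ∈ Finset.range m, ((fun k : ℕ => 1/(t+2+(k:ℝ))) j - (fun k : ℕ => 1/(t+2+(k:ℝ))) (j+1)) from
          Finset.sum_congr rfl fun j _ => by push_cast; ring_nf, Finset.sum_range_sub']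
    _ ≤ 1/(t+2) := by
        have h2 : (0:ℝ) < t+2 := by linarith
        have h4 : (0:ℝ) < t+2+(m:ℝ) := by have := Nat.cast_nonneg (α := ℝ) m; linarith
        simp only [Nat.cast_zero, add_zero]
        have : 0 ≤ 1/(t+2+(m:ℝ)) := by positivity
        linarith

lemma sumb (n : ℕ) {t : ℝ} (ht : 0 < t) :
    ∑ j ∈ Finset.range (n+1), 1/(t+1+(j:ℝ))^2 ≤ 1/(1+t)^2 + 1/(t+2)^2 + 1/(t+2) := by
  match n with
  | 0 =>
    have h2 : (0:ℝ) < t+2 := by linarith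
    have e : ∑ j ∈ Finset.range (0+1), 1/(t+1+(j:ℝ))^2 = 1/(1+t)^2 := by
      norm_num [Finset.sum_range_one]
      ring_nf
    rw [e]
    have : (0:ℝ) < 1/(t+2)^2 := by positivity
    have : (0:ℝ) < 1/(t+2) := by positivity
    linarith
  | m+1 =>
    rw [Finset.sum_range_succ', Finset.sum_range_succ']
    have e0 : t+1+((0:ℕ):ℝ) = 1+t := by push_cast; ring
    have e1 : t+1+(((0:ℕ)+1 : ℕ):ℝ) = t+2 := by push_cast; ring
    rw [e0, e1]
    have e2 : ∀ j : ℕ, t+1+((j+1+1 : ℕ):ℝ) = t+3+(j:ℝ) := by intro j; push_cast; ring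
    have : ∑ j ∈ Finset.range m, 1/(t+1+((j+1+1:ℕ):ℝ))^2 ≤ 1/(t+2) := by
      calc ∑ j ∈ Finset.range m, 1/(t+1+((j+1+1:ℕ):ℝ))^2
          = ∑ j ∈ Finset.range m, 1/(t+3+(j:ℝ))^2 := Finset.sum_congr rfl fun j _ => by rw [e2]
        _ ≤ 1/(t+2) := tele m ht
    linarith

lemma Efun''_nonpos (n : ℕ) {x : ℝ} (hx : 0 < x) : Efun'' n x ≤ 0 := by
  unfold Efun'' gfun''
  have := sumb n hx
  have e : 1/(x+1) = 1/(1+x) := by rw [add_comm]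
  have e2 : (x+2) = (2+x) := by ring
  linarith


lemma Hfun_eq {t : ℝ} (ht : 0 < t) :
    Hfun t = Real.log (Real.Gamma (t+1)) - t * Real.log (1+t) := by
  have h1 : (0:ℝ) < 1 + t := by linarith
  have hG : (0:ℝ) < Real.Gamma (t+1) := Real.Gamma_pos_of_pos (by linarith)
  unfold Hfun
  rw [← Real.Gamma_add_one ht.ne', Real.log_div hG.ne' (Real.rpow_pos_of_pos h1 t).ne',
    Real.log_rpow h1]

lemma log_GammaSeq {t : ℝ} (ht : 0 ≤ t) {n : ℕ} (hn : 1 ≤ n) :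
    Real.log (Real.GammaSeq (t+1) n)
      = (t+1) * Real.log n + Real.log (n.factorial : ℝ)
        - ∑ j ∈ Finset.range (n+1), Real.log (t+1+j) := by
  have hnp : (0:ℝ) < n := by exact_mod_cast hn
  have hterm : ∀ j ∈ Finset.range (n+1), t+1+(j:ℝ) ≠ 0 := by
    intro j _
    have := Nat.cast_nonneg (α := ℝ) j
    positivity
  have hprod : (0:ℝ) < ∏ j ∈ Finset.range (n+1), (t+1+(j:ℝ)) := by
    apply Finset.prod_pos
    intro j _
    have := Nat.cast_nonneg (α := ℝ) j
    positivity
  have hfac : (0:ℝ) < (n.factorial : ℝ) := by exact_mod_cast n.factorial_pos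
  unfold Real.GammaSeq
  rw [Real.log_div (by positivity) hprod.ne', Real.log_mul (by positivity) hfac.ne',
    Real.log_rpow hnp, Real.log_prod hterm]

lemma Efun_tendsto {t : ℝ} (ht : 0 ≤ t) :
    Tendsto (fun n => Efun n t) atTop
      (nhds (Real.log (Real.Gamma (t+1)) - t * Real.log (1+t) + gfun t)) := by
  have hG : (0:ℝ) < Real.Gamma (t+1) := Real.Gamma_pos_of_pos (by linarith)
  have h1 : Tendsto (fun n => Real.log (Real.GammaSeq (t+1) n)) atTop
      (nhds (Real.log (Real.Gamma (t+1)))) :=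
    ((Real.continuousAt_log hG.ne').tendsto).comp (Real.GammaSeq_tendsto_Gamma (t+1))
  have h2 := (h1.sub_const (t * Real.log (1+t))).add_const (gfun t)
  apply h2.congr'
  filter_upwards [Filter.eventually_ge_atTop 1] with n hn
  rw [log_GammaSeq ht hn]
  unfold Efun
  ring

lemma Efun_concave (n : ℕ) : ConcaveOn ℝ (Set.Ici (0:ℝ)) (Efun n) := by
  apply concaveOn_of_hasDerivWithinAt2_nonpos (f' := Efun' n) (f'' := Efun'' n) (convex_Ici 0)
  · intro x hx
    exact (hd_Efun n (by simp at hx ⊢; linarith)).continuousAt.continuousWithinAt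
  · intro x hx
    rw [interior_Ici] at hx
    exact (hd_Efun n (by simp at hx; linarith)).hasDerivWithinAt
  · intro x hx
    rw [interior_Ici] at hx
    exact (hd_Efun' n (by simp at hx; linarith)).hasDerivWithinAt
  · intro x hx
    rw [interior_Ici] at hx
    exact Efun''_nonpos n hx


/-- H(t) → 0 as t → 0⁺, and consequently for every K > 1 and t > 0, K·H(t) > H(Kt). -/
theorem stmt12 :
    Filter.Tendsto Hfun (nhdsWithin 0 (Set.Ioi 0)) (nhds 0) ∧
      ∀ K t : ℝ, 1 < K → 0 < t → Hfun (K * t) < K * Hfun t := by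
  constructor
  · -- part 1
    have hG1 : ContinuousAt (fun t : ℝ => Real.Gamma (t+1)) 0 := by
      have h : ContinuousAt Real.Gamma 1 := by
        refine (Real.differentiableAt_Gamma ?_).continuousAt
        intro m h
        have h2 := Nat.cast_nonneg (α := ℝ) m
        linarith
      have hadd : ContinuousAt (fun t : ℝ => t + 1) 0 := by fun_prop
      have h1 : ContinuousAt Real.Gamma ((0:ℝ)+1) := by rw [zero_add]; exact h
      exact ContinuousAt.comp (g := Real.Gamma) (f := fun t : ℝ => t + 1) (x := (0:ℝ)) h1 hadd
    have hF : ContinuousAt (fun t : ℝ => Real.log (Real.Gamma (t+1)) - t * Real.log (1+t)) 0 := by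
      apply ContinuousAt.sub
      · apply ContinuousAt.log hG1
        norm_num [Real.Gamma_one]
      · exact continuousAt_id.mul (ContinuousAt.log (by fun_prop) (by norm_num))
    have h0 : (fun t : ℝ => Real.log (Real.Gamma (t+1)) - t * Real.log (1+t)) 0 = 0 := by
      norm_num [Real.Gamma_one]
    have hcw : ContinuousWithinAt
        (fun t : ℝ => Real.log (Real.Gamma (t+1)) - t * Real.log (1+t)) (Set.Ioi 0) 0 :=
      hF.continuousWithinAt
    have hW : Filter.Tendsto (fun t : ℝ => Real.log (Real.Gamma (t+1)) - t * Real.log (1+t))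
        (nhdsWithin 0 (Set.Ioi 0)) (nhds 0) := by
      simpa [Real.Gamma_one] using hcw.tendsto
    apply hW.congr'
    exact Filter.eventuallyEq_of_mem self_mem_nhdsWithin fun t ht => (Hfun_eq ht).symm
  · -- part 2
    intro K t hK ht
    have hKpos : (0:ℝ) < K := by linarith
    have hKt : 0 < K * t := by positivity
    set a : ℝ := 1 - 1/K with ha_def
    set b : ℝ := 1/K with hb_def
    have hb : 0 < b := by positivity
    have ha : 0 < a := by
      have : 1/K < 1 := by rw [div_lt_one hKpos]; exact hK
      simp [ha_def]; linarith
    have hab : a + b = 1 := by ring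
    have hpt : a • (0:ℝ) + b • (K * t) = t := by
      simp [smul_eq_mul, hb_def]
      field_simp
    -- concavity inequality for each n
    have hconc : ∀ n : ℕ, a * Efun n 0 + b * Efun n (K*t) ≤ Efun n t := by
      intro n
      have := (Efun_concave n).2 Set.self_mem_Ici
        (Set.mem_Ici.mpr hKt.le) ha.le hb.le hab
      rw [hpt] at this
      simpa [smul_eq_mul] using this
    -- limits
    have hL0 : Tendsto (fun n => Efun n 0) atTop (nhds 0) := by
      have := Efun_tendsto (le_refl (0:ℝ))
      norm_num [Real.Gamma_one, gfun_zero] at this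
      exact this
    have hLt : Tendsto (fun n => Efun n t) atTop (nhds (Hfun t + gfun t)) := by
      have := Efun_tendsto ht.le
      rwa [← Hfun_eq ht] at this
    have hLKt : Tendsto (fun n => Efun n (K*t)) atTop (nhds (Hfun (K*t) + gfun (K*t))) := by
      have := Efun_tendsto hKt.le
      rwa [← Hfun_eq hKt] at this
    have key : a * 0 + b * (Hfun (K*t) + gfun (K*t)) ≤ Hfun t + gfun t :=
      le_of_tendsto_of_tendsto' ((hL0.const_mul a).add (hLKt.const_mul b)) hLt hconc
    -- strict convexity of gfun
    have hstrict : gfun t < a * gfun 0 + b * gfun (K*t) := by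
      have := gfun_strictConvex.2 Set.self_mem_Ici
        (Set.mem_Ici.mpr hKt.le) hKt.ne ha hb hab
      rw [hpt] at this
      simpa [smul_eq_mul] using this
    rw [gfun_zero] at hstrict
    have hfin : b * Hfun (K*t) < Hfun t := by nlinarith
    have : K * (b * Hfun (K*t)) < K * Hfun t := by
      exact (mul_lt_mul_iff_right₀ hKpos).mpr hfin
    rwa [hb_def, show K * (1/K * Hfun (K*t)) = Hfun (K*t) by field_simp] at this
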